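/- Let q = p^m and let F : (F_q)^ℓ → (F_q)^ℓ be a map satisfying F(λx) = λ^(σ+1) F(x) for all λ ∈ F_q and x ∈ (F_q)^ℓ, where σ = p^k is a power of p, and suppose F(x) = 0 if and only if x = 0. If the induced map on the projective space P^(ℓ-1)(F_q) is bijective, then F is gcd(σ+1, q-1)-to-1 on (F_q)^ℓ \ {0}, i.e., every nonzero value in the image of F has exactly gcd(σ+1, q-1) preimages. -/

import Mathlib

lemma card_pow_units_aux {F : Type*} [Field F] [Fintype F] {n : ℕ} (hn : 0 < n) :
    Nat.card {c : Fˣ // c ^ n = 1} = Nat.gcd n (Fintype.card F - 1) := by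
  haveI : Fintype Fˣ := Fintype.ofFinite _
  set N := Fintype.card F - 1 with hNdef
  classical
  have hNcard : Fintype.card Fˣ = N := by
    rw [hNdef]; convert Fintype.card_units F <;> exact Subsingleton.elim _ _
  have hN : 0 < N := by rw [← hNcard]; exact Fintype.card_pos
  set d := Nat.gcd n N with hd
  have hd0 : 0 < d := Nat.gcd_pos_of_pos_left _ hn
  have hiff : ∀ c : Fˣ, c ^ n = 1 ↔ c ^ d = 1 := by
    intro c
    constructor
    · intro h
      have h2 : c ^ N = 1 := by rw [← hNcard]; exact pow_card_eq_one
      exact orderOf_dvd_iff_pow_eq_one.mp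
        (Nat.dvd_gcd (orderOf_dvd_of_pow_eq_one h) (orderOf_dvd_of_pow_eq_one h2))
    · intro h
      obtain ⟨e, he⟩ := Nat.gcd_dvd_left n N
      rw [he, pow_mul, h, one_pow]
  obtain ⟨g, hg⟩ := IsCyclic.exists_ofOrder_eq_natCard (α := Fˣ)
  have hgN : orderOf g = N := by rw [hg, Nat.card_eq_fintype_card, hNcard]
  have hprim : IsPrimitiveRoot g N := hgN ▸ IsPrimitiveRoot.orderOf g
  obtain ⟨e, he⟩ := Nat.gcd_dvd_right n N
  have hprimd : IsPrimitiveRoot (g ^ e) d := hprim.pow hN (by rw [he, mul_comm])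
  haveI : NeZero d := ⟨hd0.ne'⟩
  have hcardru : Fintype.card (rootsOfUnity d F) = d := by
    rw [← Nat.card_eq_fintype_card]; exact hprimd.card_rootsOfUnity'
  calc Nat.card {c : Fˣ // c ^ n = 1}
      = Nat.card {c : Fˣ // c ^ d = 1} :=
        Nat.card_congr (Equiv.subtypeEquivRight hiff)
    _ = Nat.card (rootsOfUnity d F) :=
        Nat.card_congr (Equiv.subtypeEquivRight fun c => (mem_rootsOfUnity d c).symm)
    _ = d := by rw [Nat.card_eq_fintype_card, hcardru]

/-- a map on `F_q^ℓ` that is homogeneous of twisted degree `σ+1 = p^k+1`,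
vanishes only at `0`, and induces a bijection of the projective space
`P^(ℓ-1)(F_q)` is `gcd(σ+1, q-1)`-to-one on nonzero vectors. -/
theorem stmt2 (p m k ℓ : ℕ) (hp : p.Prime) (hm : 0 < m) (hℓ : 0 < ℓ)
    (F : Type*) [Field F] [Fintype F] (hcard : Fintype.card F = p ^ m)
    (Fn : (Fin ℓ → F) → (Fin ℓ → F))
    (hhom : ∀ (lam : F) (x : Fin ℓ → F), Fn (lam • x) = lam ^ (p ^ k + 1) • Fn x)
    (hzero : ∀ x, Fn x = 0 ↔ x = 0)
    -- injectivity of the induced map on projective space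
    (hinj : ∀ x y : Fin ℓ → F, x ≠ 0 → y ≠ 0 →
      (∃ c : F, c ≠ 0 ∧ Fn x = c • Fn y) → ∃ c : F, c ≠ 0 ∧ x = c • y)
    -- surjectivity of the induced map on projective space
    (hsurj : ∀ y : Fin ℓ → F, y ≠ 0 → ∃ x, x ≠ 0 ∧ ∃ c : F, c ≠ 0 ∧ Fn x = c • y) :
    ∀ x : Fin ℓ → F, x ≠ 0 →
      Nat.card {y : Fin ℓ → F // Fn y = Fn x} = Nat.gcd (p ^ k + 1) (p ^ m - 1) := by
  intro x hx
  set n := p ^ k + 1 with hn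
  have hn0 : 0 < n := Nat.succ_pos _
  obtain ⟨i, hi⟩ : ∃ i, x i ≠ 0 := by
    by_contra h
    push_neg at h
    exact hx (funext h)
  -- the bijection from n-th roots of unity to the fiber
  have key : Nat.card {y : Fin ℓ → F // Fn y = Fn x} = Nat.card {c : Fˣ // c ^ n = 1} := by
    symm
    apply Nat.card_congr
    refine Equiv.ofBijective (fun c => ⟨((c : Fˣ) : F)⁻¹ • x, ?_⟩) ⟨?_, ?_⟩
    · rw [hhom]
      have : (((c : Fˣ) : F))⁻¹ ^ n = 1 := by
        rw [inv_pow, ← Units.val_pow_eq_pow_val, c.2, Units.val_one, inv_one]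
      rw [this, one_smul]
    · rintro ⟨c, hc⟩ ⟨c', hc'⟩ hcc
      have := congrFun (congrArg Subtype.val hcc) i
      simp only [Pi.smul_apply, smul_eq_mul] at this
      have h2 : ((c : F))⁻¹ = ((c' : F))⁻¹ := mul_right_cancel₀ hi this
      have : (c : F) = (c' : F) := by
        field_simp at h2
        exact h2.symm
      exact Subtype.ext (Units.ext this)
    · rintro ⟨y, hy⟩
      have hy0 : y ≠ 0 := by
        intro h
        apply hx
        rw [← hzero x, ← hy, h, (hzero 0).mpr rfl]
      obtain ⟨c, hc0, hxy⟩ := hinj x y hx hy0 ⟨1, one_ne_zero, by rw [hy, one_smul]⟩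
      have hFnx : Fn x ≠ 0 := fun h => hx ((hzero x).mp h)
      obtain ⟨j, hj⟩ : ∃ j, Fn x j ≠ 0 := by
        by_contra h
        push_neg at h
        exact hFnx (funext h)
      have hcn : c ^ n = 1 := by
        have h1 : Fn x = c ^ n • Fn x := by
          conv_lhs => rw [hxy, hhom]
          rw [hy]
        have := congrFun h1 j
        simp only [Pi.smul_apply, smul_eq_mul] at this
        have : c ^ n * Fn x j = 1 * Fn x j := by rw [one_mul, ← this]
        have := mul_right_cancel₀ hj this
        exact this
      refine ⟨⟨Units.mk0 c hc0, ?_⟩, ?_⟩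
      · ext
        rw [Units.val_pow_eq_pow_val, Units.val_mk0, hcn, Units.val_one]
      · apply Subtype.ext
        simp only [Units.val_mk0]
        rw [hxy, smul_smul, inv_mul_cancel₀ hc0, one_smul]
  rw [key, card_pow_units_aux hn0, hcard]
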